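/- Let K be a real 2×2 matrix with det K = 1, let y ∈ ℝ, and let O(y) = [[cos y, sin y],[-sin y, cos y]]. With C = (K₁₁ + K₂₂)/2 and S = (K₁₂ - K₂₁)/2, the spectral (operator 2-) norm of K - O(y) equals √((C - cos y)² + (S - sin y)²) + √(C² + S² - 1). -/

import Mathlib

open Matrix

/-- The spectral norm of a real 2×2 matrix, i.e. the operator norm of the induced map
on the Euclidean space `ℝ²`. -/
noncomputable def specNorm2 (M : Matrix (Fin 2) (Fin 2) ℝ) : ℝ :=
  ‖(Matrix.toEuclideanCLM (𝕜 := ℝ) M : EuclideanSpace ℝ (Fin 2) →L[ℝ] EuclideanSpace ℝ (Fin 2))‖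

set_option maxHeartbeats 1000000

lemma tri_aux (u1 w1 u2 w2 : ℝ) :
    Real.sqrt ((u1+u2)^2+(w1+w2)^2) ≤ Real.sqrt (u1^2+w1^2) + Real.sqrt (u2^2+w2^2) := by
  have h1 : Real.sqrt ((u1+u2)^2+(w1+w2)^2) = ‖(⟨u1+u2, w1+w2⟩ : ℂ)‖ := by
    rw [Complex.norm_def, Complex.normSq_mk]; ring_nf
  have h2 : Real.sqrt (u1^2+w1^2) = ‖(⟨u1, w1⟩ : ℂ)‖ := by
    rw [Complex.norm_def, Complex.normSq_mk]; ring_nf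
  have h3 : Real.sqrt (u2^2+w2^2) = ‖(⟨u2, w2⟩ : ℂ)‖ := by
    rw [Complex.norm_def, Complex.normSq_mk]; ring_nf
  rw [h1, h2, h3]
  have h4 : (⟨u1+u2, w1+w2⟩ : ℂ) = ⟨u1, w1⟩ + ⟨u2, w2⟩ := by
    apply Complex.ext <;> simp
  rw [h4]
  exact norm_add_le _ _

lemma specNorm2_apply (M : Matrix (Fin 2) (Fin 2) ℝ) (v : EuclideanSpace ℝ (Fin 2)) :
    ‖(Matrix.toEuclideanCLM (𝕜 := ℝ) M) v‖ =
      Real.sqrt ((M 0 0 * v 0 + M 0 1 * v 1)^2 + (M 1 0 * v 0 + M 1 1 * v 1)^2) := by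
  rw [EuclideanSpace.norm_eq]
  congr 1
  rw [Fin.sum_univ_two]
  have h0 : (Matrix.toEuclideanCLM (𝕜 := ℝ) M) v 0 = M 0 0 * v 0 + M 0 1 * v 1 := by
    show (M.mulVec (fun i => v i)) 0 = _
    simp [Matrix.mulVec, Fin.sum_univ_two, dotProduct]
  have h1 : (Matrix.toEuclideanCLM (𝕜 := ℝ) M) v 1 = M 1 0 * v 0 + M 1 1 * v 1 := by
    show (M.mulVec (fun i => v i)) 1 = _
    simp [Matrix.mulVec, Fin.sum_univ_two, dotProduct]
  rw [h0, h1]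
  simp [Real.norm_eq_abs, sq_abs]

noncomputable def vec2 (x0 x1 : ℝ) : EuclideanSpace ℝ (Fin 2) :=
  (WithLp.equiv 2 (Fin 2 → ℝ)).symm ![x0, x1]

lemma vec2_0 (x0 x1 : ℝ) : vec2 x0 x1 0 = x0 := rfl
lemma vec2_1 (x0 x1 : ℝ) : vec2 x0 x1 1 = x1 := rfl

lemma norm_vec2 (x0 x1 : ℝ) : ‖vec2 x0 x1‖ = Real.sqrt (x0^2 + x1^2) := by
  rw [EuclideanSpace.norm_eq, Fin.sum_univ_two, vec2_0, vec2_1]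
  simp [Real.norm_eq_abs, sq_abs]

lemma sq_add_sq_eq_zero' {x y : ℝ} (h : x^2 + y^2 = 0) : x = 0 ∧ y = 0 := by
  constructor <;> nlinarith [sq_nonneg x, sq_nonneg y]

lemma spec2_core (E F G H : ℝ) :
    specNorm2 !![E+F, G-H; G+H, E-F] = Real.sqrt (E^2+H^2) + Real.sqrt (F^2+G^2) := by
  obtain ⟨p, hp⟩ : ∃ p, p = Real.sqrt (E^2+H^2) := ⟨_, rfl⟩
  obtain ⟨q, hq⟩ : ∃ q, q = Real.sqrt (F^2+G^2) := ⟨_, rfl⟩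
  have hp0 : 0 ≤ p := hp ▸ Real.sqrt_nonneg _
  have hq0 : 0 ≤ q := hq ▸ Real.sqrt_nonneg _
  have hp2 : p^2 = E^2 + H^2 := by rw [hp]; exact Real.sq_sqrt (by positivity)
  have hq2 : q^2 = F^2 + G^2 := by rw [hq]; exact Real.sq_sqrt (by positivity)
  rw [← hp, ← hq]
  obtain ⟨M, hM⟩ : ∃ M : Matrix (Fin 2) (Fin 2) ℝ, M = !![E+F, G-H; G+H, E-F] := ⟨_, rfl⟩
  rw [← hM]
  have happ : ∀ v : EuclideanSpace ℝ (Fin 2),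
      ‖(Matrix.toEuclideanCLM (𝕜 := ℝ) M) v‖ =
        Real.sqrt (((E+F) * v 0 + (G-H) * v 1)^2 + ((G+H) * v 0 + (E-F) * v 1)^2) := by
    intro v
    rw [specNorm2_apply]
    subst hM
    rfl
  -- upper bound
  have hub : ∀ v : EuclideanSpace ℝ (Fin 2),
      ‖(Matrix.toEuclideanCLM (𝕜 := ℝ) M) v‖ ≤ (p + q) * ‖v‖ := by
    intro v
    rw [happ]
    have e1 : (E+F) * v 0 + (G-H) * v 1 = (E * v 0 - H * v 1) + (F * v 0 + G * v 1) := by ring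
    have e2 : (G+H) * v 0 + (E-F) * v 1 = (H * v 0 + E * v 1) + (G * v 0 - F * v 1) := by ring
    rw [e1, e2]
    refine le_trans (tri_aux _ _ _ _) ?_
    have hv : ‖v‖ = Real.sqrt (v 0 ^ 2 + v 1 ^ 2) := by
      rw [EuclideanSpace.norm_eq, Fin.sum_univ_two]
      simp [Real.norm_eq_abs, sq_abs]
    have k1 : (E * v 0 - H * v 1)^2 + (H * v 0 + E * v 1)^2 = (E^2+H^2) * (v 0^2 + v 1^2) := by
      ring
    have k2 : (F * v 0 + G * v 1)^2 + (G * v 0 - F * v 1)^2 = (F^2+G^2) * (v 0^2 + v 1^2) := by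
      ring
    rw [k1, k2, Real.sqrt_mul (by positivity), Real.sqrt_mul (by positivity), hv, ← hp, ← hq,
      add_mul]
  -- lower bound witness: v ≠ 0 with ‖Mv‖ = (p+q)‖v‖
  have hlb : ∃ v : EuclideanSpace ℝ (Fin 2), 0 < ‖v‖ ∧
      ‖(Matrix.toEuclideanCLM (𝕜 := ℝ) M) v‖ = (p + q) * ‖v‖ := by
    rcases eq_or_lt_of_le (mul_nonneg hp0 hq0) with hr | hr
    · -- p*q = 0 : take (1,0)
      have hn : ‖vec2 1 0‖ = 1 := by rw [norm_vec2]; norm_num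
      refine ⟨vec2 1 0, by rw [hn]; norm_num, ?_⟩
      rw [happ, vec2_0, vec2_1, hn, mul_one]
      rcases mul_eq_zero.mp hr.symm with h | h
      · have hEH : E^2 + H^2 = 0 := by rw [← hp2, h]; ring
        obtain ⟨hE, hH⟩ := sq_add_sq_eq_zero' hEH
        subst hE; subst hH
        rw [h, hq, zero_add]
        congr 1
        ring
      · have hFG : F^2 + G^2 = 0 := by rw [← hq2, h]; ring
        obtain ⟨hF, hG⟩ := sq_add_sq_eq_zero' hFG
        subst hF; subst hG
        rw [h, hp, add_zero]
        congr 1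
        ring
    · -- p*q > 0
      obtain ⟨r, hrdef⟩ : ∃ r, r = p * q := ⟨_, rfl⟩
      have hr' : 0 < r := hrdef ▸ hr
      obtain ⟨A, hA⟩ : ∃ A, A = E*F + H*G := ⟨_, rfl⟩
      obtain ⟨B, hB⟩ : ∃ B, B = E*G - H*F := ⟨_, rfl⟩
      have hAB : A^2 + B^2 = r^2 := by
        rw [hA, hB, hrdef, mul_pow, hp2, hq2]; ring
      have hA2r : A^2 ≤ r^2 := by nlinarith [sq_nonneg B]
      have hAr : |A| ≤ r := by
        have h := Real.sqrt_le_sqrt hA2r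
        rwa [Real.sqrt_sq_eq_abs, Real.sqrt_sq hr'.le] at h
      have h1 : 0 ≤ r + A := by linarith [(abs_le.mp hAr).1]
      have h2 : 0 ≤ r - A := by linarith [(abs_le.mp hAr).2]
      obtain ⟨x0, hx0⟩ : ∃ x0, x0 = Real.sqrt (r + A) := ⟨_, rfl⟩
      obtain ⟨s1, hs1⟩ : ∃ s1, s1 = Real.sqrt (r - A) := ⟨_, rfl⟩
      obtain ⟨x1, hx1⟩ : ∃ x1, x1 = (if 0 ≤ B then 1 else -1) * s1 := ⟨_, rfl⟩
      have hx0sq : x0^2 = r + A := by rw [hx0]; exact Real.sq_sqrt h1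
      have hs1sq : s1^2 = r - A := by rw [hs1]; exact Real.sq_sqrt h2
      have hx1sq : x1^2 = r - A := by
        rw [hx1, mul_pow, ← hs1sq]
        rcases le_or_gt 0 B with h | h <;> simp [h]
      have hxsum : x0^2 + x1^2 = 2*r := by rw [hx0sq, hx1sq]; ring
      have hxdiff : x0^2 - x1^2 = 2*A := by rw [hx0sq, hx1sq]; ring
      have hxprod : x0 * x1 = B := by
        have hmul : x0 * s1 = |B| := by
          rw [hx0, hs1, ← Real.sqrt_mul h1]
          rw [show (r+A)*(r-A) = B^2 by linarith [hAB]]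
          exact Real.sqrt_sq_eq_abs B
        rcases le_or_gt 0 B with h | h
        · rw [hx1]; simp only [h, if_pos, one_mul]
          rw [hmul, abs_of_nonneg h]
        · rw [hx1, if_neg (not_le.mpr h)]
          rw [show x0 * (-1 * s1) = -(x0 * s1) by ring, hmul, abs_of_neg h]; ring
      refine ⟨vec2 x0 x1, ?_, ?_⟩
      · rw [norm_vec2, hxsum]
        exact Real.sqrt_pos.mpr (by linarith)
      · rw [happ, vec2_0, vec2_1, norm_vec2]
        have key : ((E+F) * x0 + (G-H) * x1)^2 + ((G+H) * x0 + (E-F) * x1)^2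
            = (2*r) * (p+q)^2 := by
          have e : ((E+F) * x0 + (G-H) * x1)^2 + ((G+H) * x0 + (E-F) * x1)^2
              = (E^2+H^2+F^2+G^2)*(x0^2+x1^2) + 2*(A*(x0^2-x1^2)) + 4*(B*(x0*x1)) := by
            rw [hA, hB]; ring
          rw [e, hxsum, hxdiff, hxprod]
          linear_combination (-2*r)*hp2 + (-2*r)*hq2 + 4*hAB + (4*r)*hrdef
        rw [key, show x0^2+x1^2 = 2*r from hxsum,
          Real.sqrt_mul (by positivity), Real.sqrt_sq (by positivity)]
        ring
  -- combine
  obtain ⟨v, hv1, hv2⟩ := hlb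
  refine le_antisymm (ContinuousLinearMap.opNorm_le_bound _ (by positivity) hub) ?_
  have h := ContinuousLinearMap.le_opNorm (Matrix.toEuclideanCLM (𝕜 := ℝ) M) v
  rw [hv2] at h
  exact le_of_mul_le_mul_right h hv1

/-- Explicit formula for the spectral norm of `K - O(y)` when `det K = 1`. -/
theorem norm_K_sub_rotation (K : Matrix (Fin 2) (Fin 2) ℝ) (hdet : K.det = 1) (y : ℝ) :
    let O : Matrix (Fin 2) (Fin 2) ℝ := !![Real.cos y, Real.sin y; -Real.sin y, Real.cos y]
    let C := (K 0 0 + K 1 1) / 2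
    let S := (K 0 1 - K 1 0) / 2
    specNorm2 (K - O) =
      Real.sqrt ((C - Real.cos y) ^ 2 + (S - Real.sin y) ^ 2) +
        Real.sqrt (C ^ 2 + S ^ 2 - 1) := by
  intro O C S
  rw [Matrix.det_fin_two] at hdet
  have hKO : K - O = !![(C - Real.cos y) + (K 0 0 - K 1 1)/2,
      (K 0 1 + K 1 0)/2 - (Real.sin y - S);
      (K 0 1 + K 1 0)/2 + (Real.sin y - S),
      (C - Real.cos y) - (K 0 0 - K 1 1)/2] := by
    ext i j
    fin_cases i <;> fin_cases j <;>
      simp [O, C, S, Matrix.sub_apply] <;> ring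
  rw [hKO, spec2_core]
  congr 1
  · congr 1
    ring
  · congr 1
    linear_combination -hdet
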